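/- If D is a diagonal integer matrix with positive diagonal entries such that BD is skew-symmetric (i.e., D is a skew-symmetrizer of the n×n integer matrix B), then for every k ∈ [1,n] the matrix μ_k(B)·D is also skew-symmetric; in particular, a skew-symmetrizer of B is a skew-symmetrizer of every matrix obtained from B by a sequence of mutations. -/
import Mathlib


open Matrix

/-- For `x : ℤ`, `[x]₊ = max x 0`.  The mutation of an `n × n` integer matrix `B` at index `k`:
`μ_k(B)_{ij} = -b_{ij}` if `i = k` or `j = k`, and
`b_{ij} + sgn(b_{ik})·[b_{ik} b_{kj}]₊` otherwise. -/
def mutate {n : Type*} [DecidableEq n] (B : Matrix n n ℤ) (k : n) : Matrix n n ℤ :=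
  Matrix.of fun i j =>
    if i = k ∨ j = k then -B i j
    else B i j + Int.sign (B i k) * max (B i k * B k j) 0

/-- Applying a finite sequence of mutations `μ_{k_s} ∘ ⋯ ∘ μ_{k_1}` to `B`. -/
def mutateSeq {n : Type*} [DecidableEq n] (B : Matrix n n ℤ) (l : List n) : Matrix n n ℤ :=
  l.foldl mutate B

lemma key_int (a b a' b' di dj dk : ℤ) (hdi : 0 < di) (hdj : 0 < dj) (hdk : 0 < dk)
    (h1 : a' * di = -(a * dk)) (h2 : b' * dk = -(b * dj)) :
    b'.sign * max (b' * a') 0 * di = -(a.sign * max (a * b) 0 * dj) := by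
  have e3 : b' * a' * (di * dk) = a * b * (dj * dk) := by
    linear_combination (b' * dk) * h1 - (a * dk) * h2
  have hdk' := hdk.ne'
  rcases lt_trichotomy (a * b) 0 with hab | hab | hab
  · have h4 : b' * a' < 0 := by nlinarith [mul_pos hdi hdk, mul_pos hdj hdk]
    rw [max_eq_right hab.le, max_eq_right h4.le]; ring
  · have h4 : b' * a' = 0 := by
      have : b' * a' * (di * dk) = 0 := by rw [e3, hab, zero_mul]
      exact (mul_eq_zero.mp this).resolve_right (mul_pos hdi hdk).ne'
    rw [hab, h4]; simp
  · have h4 : 0 < b' * a' := by nlinarith [mul_pos hdi hdk, mul_pos hdj hdk]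
    rw [max_eq_left hab.le, max_eq_left h4.le]
    rcases lt_trichotomy a 0 with ha | ha | ha
    · have hb : b < 0 := by nlinarith
      have hb' : 0 < b' := by nlinarith
      rw [Int.sign_eq_neg_one_of_neg ha, Int.sign_eq_one_of_pos hb']
      apply mul_right_cancel₀ hdk'
      linear_combination e3
    · rw [ha] at hab; simp at hab
    · have hb : 0 < b := by nlinarith
      have hb' : b' < 0 := by nlinarith
      rw [Int.sign_eq_one_of_pos ha, Int.sign_eq_neg_one_of_neg hb']
      apply mul_right_cancel₀ hdk'
      linear_combination -e3

lemma mutate_step {m : ℕ} (B : Matrix (Fin m) (Fin m) ℤ) (d : Fin m → ℤ)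
    (hd : ∀ i, 0 < d i) (h' : ∀ i j, B j i * d i = -(B i j * d j)) (k : Fin m) :
    ∀ i j, mutate B k j i * d i = -(mutate B k i j * d j) := by
  intro i j
  simp only [mutate, Matrix.of_apply]
  by_cases hij : i = k ∨ j = k
  · have hij' : j = k ∨ i = k := hij.symm
    rw [if_pos hij, if_pos hij']
    have := h' i j
    ring_nf
    linarith
  · have hij' : ¬ (j = k ∨ i = k) := fun h => hij h.symm
    rw [if_neg hij, if_neg hij']
    have h1 := h' i k
    have h2 := h' k j
    have hk := key_int (B i k) (B k j) (B k i) (B j k) (d i) (d j) (d k)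
      (hd i) (hd j) (hd k) h1 h2
    have hbase := h' i j
    linarith [hk]

/-- If `D = diag d` has positive diagonal entries and `B * D` is skew-symmetric
(`D` is a skew-symmetrizer of `B`), then for every `k` the matrix `μ_k(B) * D`
is also skew-symmetric; in particular `D` is a skew-symmetrizer of every matrix
obtained from `B` by a finite sequence of mutations. -/
theorem skewSymmetrizer_mutation {m : ℕ} (B : Matrix (Fin m) (Fin m) ℤ)
    (d : Fin m → ℤ) (hd : ∀ i, 0 < d i)
    (h : (B * Matrix.diagonal d)ᵀ = -(B * Matrix.diagonal d)) :
    (∀ k : Fin m,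
      (mutate B k * Matrix.diagonal d)ᵀ = -(mutate B k * Matrix.diagonal d)) ∧
    (∀ l : List (Fin m),
      (mutateSeq B l * Matrix.diagonal d)ᵀ = -(mutateSeq B l * Matrix.diagonal d)) := by
  have toPt : ∀ C : Matrix (Fin m) (Fin m) ℤ,
      (C * Matrix.diagonal d)ᵀ = -(C * Matrix.diagonal d) ↔
      (∀ i j, C j i * d i = -(C i j * d j)) := by
    intro C
    constructor
    · intro hC i j
      have := congrFun (congrFun hC i) j
      simpa [Matrix.mul_diagonal] using this
    · intro hC
      ext i j
      simpa [Matrix.mul_diagonal] using hC i j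
  have h' := (toPt B).mp h
  constructor
  · intro k
    exact (toPt _).mpr (mutate_step B d hd h' k)
  · intro l
    induction l generalizing B with
    | nil => simpa [mutateSeq] using h
    | cons a as ih =>
      have hB' : (mutate B a * Matrix.diagonal d)ᵀ = -(mutate B a * Matrix.diagonal d) :=
        (toPt _).mpr (mutate_step B d hd h' a)
      simpa [mutateSeq] using ih (mutate B a) hB' ((toPt _).mp hB')
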